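/- Let A be a finite-dimensional, unital, associative algebra over ℂ. If there exists a diagonal in the algebraic tensor product A ⊗ A, then A is isomorphic (as a ℂ-algebra) to a finite direct sum of full matrix algebras over ℂ; that is, there exist k ∈ ℕ and positive integers n₁, …, n_k such that A ≅ M_{n₁}(ℂ) ⊕ ⋯ ⊕ M_{n_k}(ℂ). -/

import Mathlib

open scoped TensorProduct


open Module
open scoped DirectSum

instance subSMulComm (A : Type) [Ring A] [Algebra ℂ A] (p : Submodule A A) :
    SMulCommClass A ℂ ↥p :=
  ⟨fun a c x => Subtype.ext (smul_comm a c (x : A))⟩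

section Schur
variable (A M : Type) [Ring A] [Algebra ℂ A] [AddCommGroup M] [Module A M]
    [Module ℂ M] [IsScalarTower ℂ A M] [SMulCommClass A ℂ M] [FiniteDimensional ℂ M]

theorem fd_end : FiniteDimensional ℂ (M →ₗ[A] M) :=
  FiniteDimensional.of_injective (LinearMap.restrictScalarsₗ ℂ A M M ℂ)
    (LinearMap.restrictScalars_injective ℂ)

theorem schur_closed [IsSimpleModule A M] :
    Function.Bijective (algebraMap ℂ (Module.End A M)) := by
  letI := Classical.decEq (Module.End A M)
  letI : DivisionRing (Module.End A M) := Module.End.instDivisionRing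
  haveI : FiniteDimensional ℂ (Module.End A M) := fd_end A M
  haveI : Algebra.IsIntegral ℂ (Module.End A M) := Algebra.IsIntegral.of_finite _ _
  exact ⟨RingHom.injective _, IsAlgClosed.algebraMap_bijective_of_isIntegral.2⟩

theorem finrank_end_eq_one [IsSimpleModule A M] :
    Module.finrank ℂ (M →ₗ[A] M) = 1 := by
  have e : ℂ ≃ₗ[ℂ] Module.End A M :=
    LinearEquiv.ofBijective (Algebra.ofId ℂ (Module.End A M)).toLinearMap (schur_closed A M)
  rw [← e.finrank_eq, Module.finrank_self]
end Schur

set_option maxHeartbeats 2000000 in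
theorem wedderburn (A : Type) [Ring A] [Algebra ℂ A] [FiniteDimensional ℂ A]
    [IsSemisimpleRing A] :
    ∃ (k : ℕ) (n : Fin k → ℕ), (∀ i, 0 < n i) ∧
      Nonempty (A ≃ₐ[ℂ] Π i, Matrix (Fin (n i)) (Fin (n i)) ℂ) := by
  classical
  obtain ⟨s, hfin, hindep, hsup, hsimple⟩ :=
    ((IsSemisimpleModule.finite_tfae (R := A) (M := A)).out 0 4).mp (Module.Finite.self A)
  haveI := hfin.to_subtype
  haveI : Fintype s := hfin.fintype
  haveI hsimple' : ∀ i : s, IsSimpleModule A ↥(i : Submodule A A) := fun i => hsimple _ i.2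
  haveI hfd : ∀ p : Submodule A A, FiniteDimensional ℂ ↥p := fun p =>
    FiniteDimensional.of_injective (p.subtype.restrictScalars ℂ) Subtype.val_injective
  -- internal direct sum
  have hInt : DirectSum.IsInternal (fun i : s => (i : Submodule A A)) := by
    rw [DirectSum.isInternal_submodule_iff_iSupIndep_and_iSup_eq_top]
    exact ⟨(sSupIndep_iff s).mp hindep, by rw [← sSup_eq_iSup']; exact hsup⟩
  let e0 : (⨁ i : s, ↥(i : Submodule A A)) ≃ₗ[A] A :=
    LinearEquiv.ofBijective (DirectSum.coeLinearMap _) hInt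
  -- equivalence classes
  letI r : Setoid s := ⟨fun i j => Nonempty (↥(i : Submodule A A) ≃ₗ[A] ↥(j : Submodule A A)),
    ⟨fun i => ⟨LinearEquiv.refl _ _⟩, fun ⟨e⟩ => ⟨e.symm⟩, fun ⟨e⟩ ⟨f⟩ => ⟨e.trans f⟩⟩⟩
  let Q := Quotient r
  haveI : Fintype Q := Quotient.fintype r
  let T : Q → Submodule A A := fun q => ↑(q.out)
  haveI hTsimple : ∀ q, IsSimpleModule A ↥(T q) := fun q => hsimple' q.out
  let n : Q → ℕ := fun q => finrank ℂ ↥(T q)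
  have hiso : ∀ i : s, Nonempty (↥(i : Submodule A A) ≃ₗ[A] ↥(T ⟦i⟧)) := fun i => by
    have h : r.r (⟦i⟧ : Q).out i := Quotient.mk_out i
    obtain ⟨e⟩ := h
    exact ⟨e.symm⟩
  -- the representation map
  let Φ : A →ₐ[ℂ] Π q : Q, Module.End ℂ ↥(T q) :=
    Pi.algHom ℂ _ (fun q => Algebra.lsmul ℂ ℂ ↥(T q))
  have hΦ : ∀ (x : A) (q : Q) (v : ↥(T q)), Φ x q v = x • v := fun x q v => rfl
  have hinj : Function.Injective Φ := by
    rw [injective_iff_map_eq_zero]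
    intro x hx
    have hx' : ∀ (q : Q) (v : ↥(T q)), x • v = (0 : ↥(T q)) := by
      intro q v
      rw [← hΦ, congrFun hx q]
      rfl
    have hkill : ∀ (i : s), ∀ v ∈ (i : Submodule A A), x * v = 0 := by
      intro i v hv
      obtain ⟨e⟩ := hiso i
      have h0 : x • (⟨v, hv⟩ : ↥(i : Submodule A A)) = 0 := by
        apply e.injective
        rw [map_smul, hx', map_zero]
      have := congrArg Subtype.val h0
      simpa using this
    have h1 : (1 : A) ∈ ⨆ i : s, (i : Submodule A A) := by
      rw [← sSup_eq_iSup', hsup]; trivial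
    have hx1 : x * 1 = 0 := by
      refine Submodule.iSup_induction (motive := fun y => x * y = 0) _ h1
        (fun i y hy => hkill i y hy) (mul_zero x) ?_
      intro y z hy hz
      rw [mul_add, hy, hz, add_zero]
    simpa using hx1
  -- dimension counting
  have eA : (⨁ i : s, ↥(i : Submodule A A)) ≃ₗ[ℂ] A := e0.restrictScalars ℂ
  have hA : finrank ℂ A = ∑ i : s, finrank ℂ ↥(i : Submodule A A) := by
    rw [← eA.finrank_eq, (DirectSum.linearEquivFunOnFintype ℂ s
      (fun i : s => ↥(i : Submodule A A))).finrank_eq, Module.finrank_pi_fintype ℂ]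
  haveI hfdhom : ∀ (p p' : Submodule A A), FiniteDimensional ℂ (↥p →ₗ[A] ↥p') := fun p p' =>
    FiniteDimensional.of_injective (LinearMap.restrictScalarsₗ ℂ A ↥p ↥p' ℂ)
      (LinearMap.restrictScalars_injective ℂ)
  have hterm : ∀ (q : Q) (i : s), finrank ℂ (↥(i : Submodule A A) →ₗ[A] ↥(T q))
      = if ⟦i⟧ = q then 1 else 0 := by
    intro q i
    haveI := hsimple' i
    haveI := hTsimple q
    by_cases h : ⟦i⟧ = q
    · obtain ⟨e⟩ : Nonempty (↥(i : Submodule A A) ≃ₗ[A] ↥(T q)) := h ▸ hiso i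
      rw [if_pos h, (LinearEquiv.congrLeft (M := ↥(T q)) ℂ e).finrank_eq]
      exact finrank_end_eq_one A ↥(T q)
    · rw [if_neg h]
      haveI : Subsingleton (↥(i : Submodule A A) →ₗ[A] ↥(T q)) := by
        refine subsingleton_of_forall_eq 0 fun f => ?_
        by_contra hf
        have hbij : Function.Bijective f := LinearMap.bijective_of_ne_zero hf
        have hr : r.r i (Quotient.out q) := ⟨LinearEquiv.ofBijective f hbij⟩
        exact h ((Quotient.sound hr).trans (Quotient.out_eq q))
      exact Module.finrank_zero_of_subsingleton
  have hcount : ∀ q : Q, n q = (Finset.univ.filter fun i : s => ⟦i⟧ = q).card := by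
    intro q
    have E1 : (A →ₗ[A] ↥(T q)) ≃ₗ[ℂ] ↥(T q) := LinearMap.ringLmapEquivSelf A ℂ ↥(T q)
    have E2 : ((⨁ i : s, ↥(i : Submodule A A)) →ₗ[A] ↥(T q)) ≃ₗ[ℂ] (A →ₗ[A] ↥(T q)) :=
      LinearEquiv.congrLeft (M := ↥(T q)) ℂ e0
    have E3 : (∀ i : s, (↥(i : Submodule A A) →ₗ[A] ↥(T q))) ≃ₗ[ℂ]
        ((⨁ i : s, ↥(i : Submodule A A)) →ₗ[A] ↥(T q)) := DFinsupp.lsum ℂ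
    calc n q = finrank ℂ (∀ i : s, (↥(i : Submodule A A) →ₗ[A] ↥(T q))) := by
          rw [(E3.trans (E2.trans E1)).finrank_eq]
      _ = ∑ i : s, finrank ℂ (↥(i : Submodule A A) →ₗ[A] ↥(T q)) :=
          Module.finrank_pi_fintype ℂ
      _ = ∑ i : s, if ⟦i⟧ = q then 1 else 0 := Finset.sum_congr rfl fun i _ => hterm q i
      _ = _ := (Finset.card_filter _ _).symm
  have htot : finrank ℂ A = ∑ q : Q, n q * n q := by
    rw [hA]
    calc ∑ i : s, finrank ℂ ↥(i : Submodule A A) = ∑ i : s, n ⟦i⟧ :=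
          Finset.sum_congr rfl fun i _ => by
            obtain ⟨e⟩ := hiso i
            exact (e.restrictScalars ℂ).finrank_eq
      _ = ∑ q : Q, ∑ i ∈ Finset.univ.filter (fun i : s => ⟦i⟧ = q), n ⟦i⟧ :=
          (Finset.sum_fiberwise _ _ _).symm
      _ = ∑ q : Q, n q * n q := by
          refine Finset.sum_congr rfl fun q _ => ?_
          rw [Finset.sum_congr rfl (fun i hi => by rw [(Finset.mem_filter.mp hi).2]),
            Finset.sum_const, smul_eq_mul, ← hcount q]
  have htar : finrank ℂ (Π q : Q, Module.End ℂ ↥(T q)) = ∑ q : Q, n q * n q := by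
    rw [Module.finrank_pi_fintype ℂ]
    exact Finset.sum_congr rfl fun q _ => Module.finrank_linearMap ℂ ℂ ↥(T q) ↥(T q)
  have hsurj : Function.Surjective Φ :=
    (LinearMap.injective_iff_surjective_of_finrank_eq_finrank
      (f := Φ.toLinearMap) (by rw [htot, htar])).mp hinj
  let Ψ : A ≃ₐ[ℂ] Π q : Q, Module.End ℂ ↥(T q) := AlgEquiv.ofBijective Φ ⟨hinj, hsurj⟩
  let Θ : (Π q : Q, Module.End ℂ ↥(T q)) ≃ₐ[ℂ] Π q : Q, Matrix (Fin (n q)) (Fin (n q)) ℂ :=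
    AlgEquiv.piCongrRight fun q => algEquivMatrix (finBasis ℂ ↥(T q))
  let eQ : Q ≃ Fin (Fintype.card Q) := Fintype.equivFin Q
  let Ξhom : (Π q : Q, Matrix (Fin (n q)) (Fin (n q)) ℂ) →ₐ[ℂ]
      Π j : Fin (Fintype.card Q), Matrix (Fin (n (eQ.symm j))) (Fin (n (eQ.symm j))) ℂ :=
    Pi.algHom ℂ _ (fun j => Pi.evalAlgHom ℂ _ (eQ.symm j))
  have hΞ : Function.Bijective Ξhom :=
    (Equiv.piCongrLeft' (fun q => Matrix (Fin (n q)) (Fin (n q)) ℂ) eQ).bijective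
  let Ξ := AlgEquiv.ofBijective Ξhom hΞ
  refine ⟨Fintype.card Q, fun j => n (eQ.symm j), fun j => ?_, ⟨(Ψ.trans Θ).trans Ξ⟩⟩
  haveI := hTsimple (eQ.symm j)
  haveI : Nontrivial ↥(T (eQ.symm j)) := IsSimpleModule.nontrivial A _
  exact Module.finrank_pos


theorem aux_semisimple (A : Type) [Ring A] [Algebra ℂ A] [FiniteDimensional ℂ A]
    (ι : Type) [Fintype ι] (a b : ι → A)
    (h1 : ∑ i, a i * b i = 1)
    (h2 : ∀ c : A, ∑ i, (c * a i) ⊗ₜ[ℂ] b i = ∑ i, a i ⊗ₜ[ℂ] (b i * c)) :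
    IsSemisimpleRing A := by
  suffices h : ComplementedLattice (Submodule A A) from { toComplementedLattice := h }
  refine ⟨?_⟩
  intro I
  -- ℂ-linear projection onto I
  obtain ⟨J, hJ⟩ := Submodule.exists_isCompl (I.restrictScalars ℂ)
  set π₀ : A →ₗ[ℂ] ↥(I.restrictScalars ℂ) := (I.restrictScalars ℂ).linearProjOfIsCompl J hJ
  let π : A →ₗ[ℂ] A := (I.restrictScalars ℂ).subtype.comp π₀
  have hπ : ∀ x ∈ I, π x = x := fun x hx => by
    exact congrArg Subtype.val (Submodule.linearProjOfIsCompl_apply_left hJ ⟨x, hx⟩)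
  have hπmem : ∀ x, π x ∈ I := fun x => (π₀ x).2
  -- the bilinear evaluation
  let F : A → A ⊗[ℂ] A →ₗ[ℂ] A := fun m => TensorProduct.lift
    (LinearMap.mk₂ ℂ (fun x y => x * π (y * m))
      (fun x x' y => by rw [add_mul])
      (fun c x y => by rw [smul_mul_assoc])
      (fun x y y' => by rw [add_mul, map_add, mul_add])
      (fun c x y => by rw [smul_mul_assoc, map_smul, mul_smul_comm]))
  have hF : ∀ m x y, F m (x ⊗ₜ[ℂ] y) = x * π (y * m) := fun m x y => rfl
  let ρ : A →ₗ[A] ↥I :=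
    { toFun := fun m => ⟨∑ i, a i * π (b i * m), Submodule.sum_mem _ fun i _ =>
        I.smul_mem (a i) (hπmem _)⟩
      map_add' := fun m m' => by
        ext
        simp [mul_add, map_add, Finset.sum_add_distrib]
      map_smul' := fun c m => by
        ext
        have := congrArg (F m) (h2 c)
        simp only [map_sum, hF] at this
        simp only [RingHom.id_apply, smul_eq_mul, Submodule.coe_smul_of_tower]
        calc ∑ i, a i * π (b i * (c * m)) = ∑ i, a i * π (b i * c * m) := by
              simp_rw [mul_assoc]
          _ = ∑ i, c * a i * π (b i * m) := this.symm
          _ = c * ∑ i, a i * π (b i * m) := by rw [Finset.mul_sum]; simp_rw [mul_assoc] }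
  have hρ : ∀ x : ↥I, ρ x = x := fun ⟨x, hx⟩ => by
    ext
    simp only [ρ, LinearMap.coe_mk, AddHom.coe_mk]
    calc ∑ i, a i * π (b i * x) = ∑ i, a i * (b i * x) := by
          refine Finset.sum_congr rfl fun i _ => ?_
          exact congrArg _ (hπ (b i * x) (I.smul_mem (b i) hx))
      _ = (∑ i, a i * b i) * x := by rw [Finset.sum_mul]; simp [mul_assoc]
      _ = x := by rw [h1, one_mul]
  exact ⟨LinearMap.ker ρ, LinearMap.isCompl_of_proj hρ⟩

/-- If a finite-dimensional unital complex algebra `A` has a diagonal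
`Σᵢ aᵢ ⊗ bᵢ` in the algebraic tensor product `A ⊗ A` (so `Σᵢ aᵢbᵢ = 1` and
`Σᵢ (c·aᵢ) ⊗ bᵢ = Σᵢ aᵢ ⊗ (bᵢ·c)` for all `c`), then `A` is isomorphic as a
ℂ-algebra to a finite direct sum of full matrix algebras over ℂ. -/
theorem findim_algebra_with_diagonal_is_sum_of_matrix_algebras
    (A : Type) [Ring A] [Algebra ℂ A] [FiniteDimensional ℂ A]
    (ι : Type) [Fintype ι] (a b : ι → A)
    (h1 : ∑ i, a i * b i = 1)
    (h2 : ∀ c : A, ∑ i, (c * a i) ⊗ₜ[ℂ] b i = ∑ i, a i ⊗ₜ[ℂ] (b i * c)) :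
    ∃ (k : ℕ) (n : Fin k → ℕ), (∀ i, 0 < n i) ∧
      Nonempty (A ≃ₐ[ℂ] Π i, Matrix (Fin (n i)) (Fin (n i)) ℂ) := by
  haveI : IsSemisimpleRing A := aux_semisimple A ι a b h1 h2
  exact wedderburn A
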